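/- Let k ≥ 2, m ≥ 1, and let R be a symmetric m×m integer matrix. Let a, b, c, d ∈ ℤ_{≥0}^m with binary digit expansions a = a_0 + 2a_1 + …, b = b_0 + 2b_1 + …, c = c_0 + 2c_1 + …, d = d_0 + 2d_1 + …. Then for every v ∈ {0,1}^m: q^{(k−1)}(v ⊕ c_0; R, a, b) + q^{(k−1)}(v; R, c, d) ≡ q^{(k−1)}(v; R, a, b) + q^{(k−1)}(v ⊕ a_0; R, c, d) (mod 2^k). -/
import Mathlib


open Complex Matrix

namespace CliffordHierarchy

noncomputable section

variable {ι : Type*} [Fintype ι] [DecidableEq ι]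

/-- Embed a binary vector (entries in `ZMod 2`) into ℤ as a 0/1 vector. -/
def toZ (v : ι → ZMod 2) : ι → ℤ := fun i => ((v i).val : ℤ)

/-- Reduce an integer vector mod 2, viewed in `ZMod 2`. -/
def red2 (a : ι → ℤ) : ι → ZMod 2 := fun i => ((a i : ZMod 2))

/-- Dot product of integer row vectors, over ℤ. -/
def dotZ (x y : ι → ℤ) : ℤ := ∑ i, x i * y i

/-- Bilinear form `x R yᵀ` over ℤ. -/
def bil (R : Matrix ι ι ℤ) (x y : ι → ℤ) : ℤ := ∑ i, ∑ j, x i * R i j * y j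

/-- η(v; R, w) = [(v + w) − (v ∗ w)] R (v ∗ w)ᵀ, with ∗ the entrywise product. -/
def eta (R : Matrix ι ι ℤ) (v w : ι → ℤ) : ℤ := bil R (v + w - v * w) (v * w)

/-- bitwise XOR of 0/1 integer vectors, re-embedded as a 0/1 integer vector. -/
def vxor (v w : ι → ℤ) : ι → ℤ := fun i => v i + w i - 2 * (v i * w i)

/-- ξ_k = exp(2πi/2^k). -/
def xi (k : ℕ) : ℂ := Complex.exp (2 * Real.pi * Complex.I / 2 ^ k)

/-- τ_R^{(k)} = diag(ξ^{v R vᵀ mod 2^k}), indexed by v ∈ {0,1}^m. -/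
def tau (k : ℕ) (R : Matrix ι ι ℤ) : Matrix (ι → ZMod 2) (ι → ZMod 2) ℂ :=
  Matrix.diagonal fun v => xi k ^ (bil R (toZ v) (toZ v) % 2 ^ k)

/-- The Hermitian Pauli matrix E(a,b) extended to integer-vector arguments:
    E(a,b) e_v = i^{a·b mod 4} (−1)^{v·b} e_{v ⊕ a₀}. -/
def EMat (a b : ι → ℤ) : Matrix (ι → ZMod 2) (ι → ZMod 2) ℂ :=
  Matrix.of fun u v =>
    if u = v + red2 a then Complex.I ^ (dotZ a b % 4) * (-1 : ℂ) ^ dotZ (toZ v) b else 0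

/-- 0th binary digit vector of a (componentwise `mod 2`). -/
def dig0 (a : ι → ℤ) : ι → ℤ := fun i => a i % 2

/-- 1st binary digit vector of a. -/
def dig1 (a : ι → ℤ) : ι → ℤ := fun i => (a i / 2) % 2

/-- q^{(k−1)}(v; R, a, b). -/
def qfun (k : ℕ) (R : Matrix ι ι ℤ) (a b v : ι → ℤ) : ℤ :=
  (1 - 2 ^ (k - 2)) * bil R (dig0 a) (dig0 a)
    + 2 ^ (k - 1) * (dotZ (dig0 a) (dig1 b) + dotZ (dig0 b) (dig1 a))
    + (2 + 2 ^ (k - 1)) * bil R v (dig0 a) - 4 * eta R v (dig0 a)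



theorem stmt13 {m k : ℕ} (hm : 1 ≤ m) (hk : 2 ≤ k)
    (R : Matrix (Fin m) (Fin m) ℤ) (hR : R.IsSymm)
    (a b c d : Fin m → ℤ)
    (ha : ∀ i, 0 ≤ a i) (hb : ∀ i, 0 ≤ b i) (hc : ∀ i, 0 ≤ c i) (hd : ∀ i, 0 ≤ d i)
    (v : Fin m → ℤ) (hv : ∀ i, v i = 0 ∨ v i = 1) :
    qfun k R a b (vxor v (dig0 c)) + qfun k R c d v
      ≡ qfun k R a b v + qfun k R c d (vxor v (dig0 a)) [ZMOD (2 ^ k)] := by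
  set A : Fin m → ℤ := dig0 a with hA
  set C : Fin m → ℤ := dig0 c with hC
  set t : ℤ := 2 ^ (k - 1) with ht
  have hkpow : (2 : ℤ) ^ k = 2 * t := by
    rw [ht, ← pow_succ']
    congr 1
    omega
  -- the per-pair summand
  set H : Fin m → Fin m → ℤ := fun i j =>
    (2 + t) * ((vxor v C i - v i) * R i j * A j + (v i - vxor v A i) * R i j * C j)
    - 4 * ((vxor v C i + A i - vxor v C i * A i) * R i j * (vxor v C j * A j)
         - (v i + A i - v i * A i) * R i j * (v j * A j)
         + (v i + C i - v i * C i) * R i j * (v j * C j)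
         - (vxor v A i + C i - vxor v A i * C i) * R i j * (vxor v A j * C j))
    - 2 * t * ((v i * A i) * R i j * C j - (v i * C i) * R i j * A j) with hH
  have hsum : ∑ i, ∑ j, H i j = 0 := by
    have hcomm : (∑ i, ∑ j, H j i) = ∑ j, ∑ i, H j i := Finset.sum_comm
    have hz : ∀ i j, H i j + H j i = 0 := by
      intro i j
      have hRij : R j i = R i j := hR.apply i j
      simp only [hH, vxor, hRij]
      ring
    have hadd : (∑ i, ∑ j, H i j) + (∑ i, ∑ j, H j i) = 0 := by
      simp only [← Finset.sum_add_distrib]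
      exact Finset.sum_eq_zero fun i _ => Finset.sum_eq_zero fun j _ => hz i j
    rw [hcomm] at hadd
    linarith
  have key : qfun k R a b (vxor v C) + qfun k R c d v
      - (qfun k R a b v + qfun k R c d (vxor v A))
      = 2 ^ k * (bil R (v * A) C - bil R (v * C) A) := by
    have e1 : (2 + t) * (bil R (vxor v C) A - bil R v A)
        - 4 * (eta R (vxor v C) A - eta R v A)
        + ((2 + t) * (bil R v C - bil R (vxor v A) C)
          - 4 * (eta R v C - eta R (vxor v A) C))
        - 2 * t * (bil R (v * A) C - bil R (v * C) A)
        = ∑ i, ∑ j, H i j := by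
      simp only [eta, bil, hH, Pi.add_apply, Pi.sub_apply, Pi.mul_apply,
        ← Finset.sum_sub_distrib, Finset.mul_sum, ← Finset.sum_add_distrib]
      refine Finset.sum_congr rfl fun i _ => Finset.sum_congr rfl fun j _ => ?_
      ring
    have e2 : qfun k R a b (vxor v C) + qfun k R c d v
        - (qfun k R a b v + qfun k R c d (vxor v A))
        - 2 ^ k * (bil R (v * A) C - bil R (v * C) A)
        = (2 + t) * (bil R (vxor v C) A - bil R v A)
          - 4 * (eta R (vxor v C) A - eta R v A)
          + ((2 + t) * (bil R v C - bil R (vxor v A) C)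
            - 4 * (eta R v C - eta R (vxor v A) C))
          - 2 * t * (bil R (v * A) C - bil R (v * C) A) := by
      rw [hkpow]
      simp only [qfun, ← hA, ← hC, ← ht]
      ring
    have h3 := e2.trans (e1.trans hsum)
    linarith
  have hdvd : (2 : ℤ) ^ k ∣ (qfun k R a b v + qfun k R c d (vxor v A))
      - (qfun k R a b (vxor v C) + qfun k R c d v) := by
    refine ⟨-(bil R (v * A) C - bil R (v * C) A), ?_⟩
    linarith
  exact Int.modEq_iff_dvd.mpr hdvd


end

end CliffordHierarchy
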